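/- Quantum Fisher information is convex: F(Σₙ λₙ ρₙ, H) ≤ Σₙ λₙ F(ρₙ, H) for probability weights λₙ ≥ 0 summing to 1 and density matrices ρₙ. -/

import Mathlib

open Matrix BigOperators Kronecker

/-- |v⟩⟨v| as a matrix. -/
noncomputable def ketbra {d : Type*} [Fintype d] (v : d → ℂ) : Matrix d d ℂ :=
  Matrix.vecMulVec v (star v)

/-- An orthonormal family of vectors. -/
def OrthonormalFam {ι d : Type*} [DecidableEq ι] [Fintype d] (ψ : ι → d → ℂ) : Prop :=
  ∀ i j, star (ψ i) ⬝ᵥ ψ j = if i = j then (1 : ℂ) else 0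

/-- Quantum Fisher information computed from a spectral decomposition (p, ψ):
    F = Σ_{i,j : pᵢ+pⱼ>0} (pᵢ-pⱼ)²/(2(pᵢ+pⱼ)) |⟨ψᵢ|H|ψⱼ⟩|². -/
noncomputable def qfi {ι d : Type*} [Fintype ι] [Fintype d]
    (p : ι → ℝ) (ψ : ι → d → ℂ) (H : Matrix d d ℂ) : ℝ :=
  ∑ i, ∑ j,
    if 0 < p i + p j then
      (p i - p j) ^ 2 / (2 * (p i + p j)) * Complex.normSq (star (ψ i) ⬝ᵥ H *ᵥ ψ j)
    else 0

/-- (p, ψ) is a (full) spectral decomposition of the density matrix ρ. -/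
def IsSpectralDecomp {d : Type*} [Fintype d] [DecidableEq d]
    (ρ : Matrix d d ℂ) (p : d → ℝ) (ψ : d → d → ℂ) : Prop :=
  (∀ i, 0 ≤ p i) ∧ (∑ i, p i = 1) ∧ OrthonormalFam ψ ∧ ρ = ∑ i, p i • ketbra (ψ i)

namespace QFIAux


variable {n : ℕ}

noncomputable def Vm (ψ : Fin n → Fin n → ℂ) : Matrix (Fin n) (Fin n) ℂ :=
  Matrix.of fun i j => ψ j i

lemma Vm_left (ψ : Fin n → Fin n → ℂ) (h : OrthonormalFam ψ) :
    (Vm ψ)ᴴ * Vm ψ = 1 := by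
  ext i j
  have := h i j
  simpa [Matrix.mul_apply, Vm, Matrix.conjTranspose_apply, dotProduct,
    Matrix.one_apply] using this

lemma Vm_right (ψ : Fin n → Fin n → ℂ) (h : OrthonormalFam ψ) :
    Vm ψ * (Vm ψ)ᴴ = 1 :=
  mul_eq_one_comm.mp (Vm_left ψ h)

lemma tilde_apply (ψ : Fin n → Fin n → ℂ) (M : Matrix (Fin n) (Fin n) ℂ) (i j : Fin n) :
    ((Vm ψ)ᴴ * M * Vm ψ) i j = star (ψ i) ⬝ᵥ M *ᵥ ψ j := by
  simp [Matrix.mul_apply, Vm, Matrix.conjTranspose_apply, dotProduct, Matrix.mulVec,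
    Finset.mul_sum, Finset.sum_mul, mul_assoc]
  exact Finset.sum_comm

lemma rho_eq (p : Fin n → ℝ) (ψ : Fin n → Fin n → ℂ) :
    (∑ i, p i • ketbra (ψ i)) =
      Vm ψ * Matrix.diagonal (fun i => (p i : ℂ)) * (Vm ψ)ᴴ := by
  ext a b
  simp only [Matrix.mul_assoc, Matrix.diagonal_mul]
  simp [Matrix.sum_apply, ketbra, Matrix.vecMulVec_apply, Matrix.mul_apply, Vm,
    Matrix.conjTranspose_apply, Complex.real_smul]
  exact Finset.sum_congr rfl fun k _ => by
    simp [Matrix.diagonal_apply, ite_mul, Finset.sum_ite_eq]; ring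

noncomputable def Gfun (H A ρ : Matrix (Fin n) (Fin n) ℂ) : ℝ :=
  -(Complex.I * Matrix.trace (Aᴴ * (H * ρ - ρ * H))).re
    - (1/2) * ((Matrix.trace (Aᴴ * A * ρ)).re + (Matrix.trace (A * Aᴴ * ρ)).re)

lemma etr (X Y : Matrix (Fin n) (Fin n) ℂ) (p : Fin n → ℝ) :
    Matrix.trace (X * Y * Matrix.diagonal (fun i => (p i : ℂ)))
      = ∑ j, ∑ i, X j i * Y i j * (p j : ℂ) := by
  simp [Matrix.trace, Matrix.diag, Matrix.mul_apply, Matrix.diagonal_apply, Finset.sum_mul,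
    mul_ite, ite_mul, mul_zero, zero_mul]

lemma trace_conj (M V D : Matrix (Fin n) (Fin n) ℂ) :
    Matrix.trace (M * (V * D * Vᴴ)) = Matrix.trace (Vᴴ * M * V * D) := by
  rw [show M * (V * D * Vᴴ) = (M * V * D) * Vᴴ by simp [Matrix.mul_assoc],
    Matrix.trace_mul_comm]
  simp [Matrix.mul_assoc]

lemma dsum_sub {β : Type*} [AddCommGroup β] (f g : Fin n → Fin n → β) :
    (∑ i, ∑ j, f i j) - (∑ i, ∑ j, g i j) = ∑ i, ∑ j, (f i j - g i j) := by
  rw [← Finset.sum_sub_distrib]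
  exact Finset.sum_congr rfl fun i _ => (Finset.sum_sub_distrib ..).symm

lemma dsum_add {β : Type*} [AddCommMonoid β] (f g : Fin n → Fin n → β) :
    (∑ i, ∑ j, f i j) + (∑ i, ∑ j, g i j) = ∑ i, ∑ j, (f i j + g i j) := by
  rw [← Finset.sum_add_distrib]
  exact Finset.sum_congr rfl fun i _ => Finset.sum_add_distrib.symm

lemma dsum_mul {β : Type*} [NonUnitalNonAssocSemiring β] (a : β) (f : Fin n → Fin n → β) :
    a * (∑ i, ∑ j, f i j) = ∑ i, ∑ j, a * f i j := by
  simp [Finset.mul_sum]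

lemma dsum_neg {β : Type*} [AddCommGroup β] (f : Fin n → Fin n → β) :
    -(∑ i, ∑ j, f i j) = ∑ i, ∑ j, -(f i j) := by
  simp

lemma dsum_re (f : Fin n → Fin n → ℂ) :
    (∑ i, ∑ j, f i j).re = ∑ i, ∑ j, (f i j).re := by
  rw [Complex.re_sum]
  exact Finset.sum_congr rfl fun i _ => Complex.re_sum _ _

lemma G_expand (H A ρ : Matrix (Fin n) (Fin n) ℂ) (p : Fin n → ℝ) (ψ : Fin n → Fin n → ℂ)
    (hψ : OrthonormalFam ψ) (hρ : ρ = ∑ i, p i • ketbra (ψ i)) :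
    Gfun H A ρ = ∑ i, ∑ j,
      (-(Complex.I * ((starRingEnd ℂ) (star (ψ i) ⬝ᵥ A *ᵥ ψ j) * (star (ψ i) ⬝ᵥ H *ᵥ ψ j))).re
          * (p j - p i)
        - Complex.normSq (star (ψ i) ⬝ᵥ A *ᵥ ψ j) * (p i + p j) / 2) := by
  classical
  set V := Vm ψ with hV
  have h2 : V * Vᴴ = 1 := Vm_right ψ hψ
  have hVV : ∀ X : Matrix (Fin n) (Fin n) ℂ, V * (Vᴴ * X) = X := fun X => by
    rw [← Matrix.mul_assoc, h2, Matrix.one_mul]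
  set tA := Vᴴ * A * V with htA
  set tH := Vᴴ * H * V with htH
  have hρ' : ρ = V * Matrix.diagonal (fun i => (p i : ℂ)) * Vᴴ := by
    rw [hρ]; exact rho_eq p ψ
  have key : ∀ M X Y : Matrix (Fin n) (Fin n) ℂ, Vᴴ * M * V = X * Y →
      Matrix.trace (M * ρ) = ∑ j, ∑ i, X j i * Y i j * (p j : ℂ) := by
    intro M X Y hXY
    rw [hρ', trace_conj, hXY, etr]
  have fAH : Vᴴ * (Aᴴ * H) * V = tAᴴ * tH := by
    rw [htA, htH]
    simp only [Matrix.conjTranspose_mul, Matrix.conjTranspose_conjTranspose,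
      Matrix.mul_assoc, hVV]
  have fHA : Vᴴ * (H * Aᴴ) * V = tH * tAᴴ := by
    rw [htA, htH]
    simp only [Matrix.conjTranspose_mul, Matrix.conjTranspose_conjTranspose,
      Matrix.mul_assoc, hVV]
  have fAA : Vᴴ * (Aᴴ * A) * V = tAᴴ * tA := by
    rw [htA]
    simp only [Matrix.conjTranspose_mul, Matrix.conjTranspose_conjTranspose,
      Matrix.mul_assoc, hVV]
  have fAAd : Vᴴ * (A * Aᴴ) * V = tA * tAᴴ := by
    rw [htA]
    simp only [Matrix.conjTranspose_mul, Matrix.conjTranspose_conjTranspose,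
      Matrix.mul_assoc, hVV]
  have split : Matrix.trace (Aᴴ * (H * ρ - ρ * H))
      = Matrix.trace ((Aᴴ * H) * ρ) - Matrix.trace ((H * Aᴴ) * ρ) := by
    rw [Matrix.mul_sub, Matrix.trace_sub, Matrix.mul_assoc]
    congr 1
    rw [show Aᴴ * (ρ * H) = (Aᴴ * ρ) * H by rw [Matrix.mul_assoc],
      Matrix.trace_mul_comm, Matrix.mul_assoc]
  have hAA : Aᴴ * A * ρ = (Aᴴ * A) * ρ := rfl
  rw [Gfun, split, key _ _ _ fAH, key _ _ _ fHA, key _ _ _ fAA, key _ _ _ fAAd]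
  have hent : ∀ i j, tA i j = star (ψ i) ⬝ᵥ A *ᵥ ψ j := fun i j => tilde_apply ψ A i j
  have hentH : ∀ i j, tH i j = star (ψ i) ⬝ᵥ H *ᵥ ψ j := fun i j => tilde_apply ψ H i j
  simp only [← hent, ← hentH, Matrix.conjTranspose_apply]
  have e1 : (∑ x, ∑ x1, star (tA x1 x) * tH x1 x * ((p x : ℂ)))
      = ∑ i, ∑ j, star (tA i j) * tH i j * ((p j : ℂ)) := Finset.sum_comm
  have e3 : (∑ x, ∑ x1, star (tA x1 x) * tA x1 x * ((p x : ℂ)))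
      = ∑ i, ∑ j, star (tA i j) * tA i j * ((p j : ℂ)) := Finset.sum_comm
  rw [e1, e3, dsum_sub, dsum_mul Complex.I, dsum_re, dsum_neg, dsum_re, dsum_re, dsum_add,
    dsum_mul ((1:ℝ)/2), ← dsum_neg, dsum_neg, dsum_sub]
  refine Finset.sum_congr rfl fun i _ => Finset.sum_congr rfl fun j _ => ?_
  simp only [Complex.star_def, Complex.mul_re, Complex.mul_im, Complex.sub_re, Complex.sub_im,
    Complex.ofReal_re, Complex.ofReal_im, Complex.I_re, Complex.I_im, Complex.normSq_apply,
    Complex.conj_re, Complex.conj_im]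
  ring

lemma G_linear {K : ℕ} (H A : Matrix (Fin n) (Fin n) ℂ) (lam : Fin K → ℝ)
    (ρ : Fin K → Matrix (Fin n) (Fin n) ℂ) :
    Gfun H A (∑ k, lam k • ρ k) = ∑ k, lam k * Gfun H A (ρ k) := by
  have tsum : ∀ (C : Matrix (Fin n) (Fin n) ℂ) (B : Fin K → Matrix (Fin n) (Fin n) ℂ),
      Matrix.trace (C * ∑ k, lam k • B k) = ∑ k, lam k • Matrix.trace (C * B k) := by
    intro C B
    rw [Finset.mul_sum, Matrix.trace_sum]
    exact Finset.sum_congr rfl fun k _ => by rw [mul_smul_comm, Matrix.trace_smul]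
  have hcomm : H * (∑ k, lam k • ρ k) - (∑ k, lam k • ρ k) * H
      = ∑ k, lam k • (H * ρ k - ρ k * H) := by
    rw [Finset.mul_sum, Finset.sum_mul, ← Finset.sum_sub_distrib]
    exact Finset.sum_congr rfl fun k _ => by rw [mul_smul_comm, smul_mul_assoc, ← smul_sub]
  rw [Gfun, hcomm, tsum Aᴴ, tsum (Aᴴ * A) ρ, tsum (A * Aᴴ) ρ]
  simp only [Finset.mul_sum, mul_smul_comm, Complex.re_sum, Complex.smul_re, Gfun]
  rw [← Finset.sum_add_distrib, Finset.mul_sum, ← Finset.sum_neg_distrib, ← Finset.sum_sub_distrib]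
  exact Finset.sum_congr rfl fun k _ => by simp [smul_eq_mul]; ring

lemma pointwise_le (a b : ℝ) (ha : 0 ≤ a) (hb : 0 ≤ b) (z w : ℂ) :
    -(Complex.I * ((starRingEnd ℂ) z * w)).re * (b - a) - Complex.normSq z * (a + b) / 2
      ≤ (if 0 < a + b then (a - b) ^ 2 / (2 * (a + b)) * Complex.normSq w else 0) := by
  set r := (Complex.I * ((starRingEnd ℂ) z * w)).re with hr
  have hr2 : r ^ 2 ≤ Complex.normSq z * Complex.normSq w := by
    have h1 : r ^ 2 ≤ Complex.normSq (Complex.I * ((starRingEnd ℂ) z * w)) := by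
      rw [Complex.normSq_apply]; nlinarith [sq_nonneg ((Complex.I * ((starRingEnd ℂ) z * w)).im)]
    calc r ^ 2 ≤ _ := h1
      _ = Complex.normSq z * Complex.normSq w := by
        simp [Complex.normSq_mul, Complex.normSq_conj, Complex.normSq_I]
  have hz := Complex.normSq_nonneg z
  have hw := Complex.normSq_nonneg w
  split_ifs with hab
  · rw [div_mul_eq_mul_div, le_div_iff₀ (by positivity)]
    rcases eq_or_lt_of_le hz with hs0 | hs0
    · have hr0 : r = 0 := by nlinarith [sq_nonneg r]
      rw [hr0, ← hs0]
      have : (0:ℝ) ≤ (a - b) ^ 2 * Complex.normSq w := by positivity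
      nlinarith
    · nlinarith [sq_nonneg (Complex.normSq z * (a + b) - r * (a - b)),
        mul_le_mul_of_nonneg_right hr2 (sq_nonneg (a - b)), mul_pos hs0 hab]
  · have ha0 : a = 0 := by linarith [not_lt.mp hab]
    have hb0 : b = 0 := by linarith [not_lt.mp hab]
    simp [ha0, hb0]

lemma pointwise_eq (a b : ℝ) (ha : 0 ≤ a) (hb : 0 ≤ b) (w : ℂ)
    (x : ℝ) (hx : x = if 0 < a + b then (a - b) / (a + b) else 0) :
    -(Complex.I * ((starRingEnd ℂ) ((x : ℂ) * (Complex.I * w)) * w)).re * (b - a)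
        - Complex.normSq ((x : ℂ) * (Complex.I * w)) * (a + b) / 2
      = (if 0 < a + b then (a - b) ^ 2 / (2 * (a + b)) * Complex.normSq w else 0) := by
  have h1 : (Complex.I * ((starRingEnd ℂ) ((x : ℂ) * (Complex.I * w)) * w)).re
      = x * Complex.normSq w := by
    simp [Complex.mul_re, Complex.mul_im, Complex.conj_re, Complex.conj_im,
      Complex.normSq_apply]
    ring
  have h2 : Complex.normSq ((x : ℂ) * (Complex.I * w)) = x ^ 2 * Complex.normSq w := by
    rw [Complex.normSq_mul, Complex.normSq_mul, Complex.normSq_ofReal, Complex.normSq_I]; ring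
  rw [h1, h2]
  split_ifs at hx ⊢ with hab
  · subst hx; field_simp; ring
  · subst hx; simp

end QFIAux

open QFIAux in
/-- Convexity of QFI: F(Σₙ λₙ ρₙ, H) ≤ Σₙ λₙ F(ρₙ, H). -/
theorem stmt5 {n K : ℕ} (H : Matrix (Fin n) (Fin n) ℂ) (hH : H.IsHermitian)
    (lam : Fin K → ℝ) (hlam : ∀ k, 0 ≤ lam k) (hlamsum : ∑ k, lam k = 1)
    (ρ : Fin K → Matrix (Fin n) (Fin n) ℂ)
    (p : Fin K → Fin n → ℝ) (ψ : Fin K → Fin n → Fin n → ℂ)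
    (hdec : ∀ k, IsSpectralDecomp (ρ k) (p k) (ψ k))
    (q : Fin n → ℝ) (φ : Fin n → Fin n → ℂ)
    (hmix : IsSpectralDecomp (∑ k, lam k • ρ k) q φ) :
    qfi q φ H ≤ ∑ k, lam k * qfi (p k) (ψ k) H := by
  classical
  obtain ⟨hq0, hq1, hφ, hmixeq⟩ := hmix
  set x : Fin n → Fin n → ℝ :=
    fun i j => if 0 < q i + q j then (q i - q j) / (q i + q j) else 0 with hxdef
  set tHφ : Fin n → Fin n → ℂ := fun i j => star (φ i) ⬝ᵥ H *ᵥ φ j with htHφ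
  set B : Matrix (Fin n) (Fin n) ℂ :=
    Matrix.of fun i j => (x i j : ℂ) * (Complex.I * tHφ i j) with hB
  set A : Matrix (Fin n) (Fin n) ℂ := Vm φ * B * (Vm φ)ᴴ with hA
  have hφl := Vm_left φ hφ
  have hBt : (Vm φ)ᴴ * A * Vm φ = B := by
    rw [hA]
    simp only [Matrix.mul_assoc]
    rw [hφl, Matrix.mul_one, ← Matrix.mul_assoc, hφl, Matrix.one_mul]
  have hAt : ∀ i j, star (φ i) ⬝ᵥ A *ᵥ φ j = B i j := by
    intro i j; rw [← tilde_apply φ A i j, hBt]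
  calc qfi q φ H = Gfun H A (∑ k, lam k • ρ k) := by
        rw [G_expand H A _ q φ hφ hmixeq, qfi]
        refine Finset.sum_congr rfl fun i _ => Finset.sum_congr rfl fun j _ => ?_
        rw [hAt i j]
        have hBij : B i j = ((x i j : ℝ) : ℂ) * (Complex.I * tHφ i j) := rfl
        rw [hBij]
        exact (pointwise_eq (q i) (q j) (hq0 i) (hq0 j) (tHφ i j) (x i j) rfl).symm
    _ = ∑ k, lam k * Gfun H A (ρ k) := G_linear H A lam ρ
    _ ≤ ∑ k, lam k * qfi (p k) (ψ k) H := by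
        refine Finset.sum_le_sum fun k _ => mul_le_mul_of_nonneg_left ?_ (hlam k)
        obtain ⟨hp0, hp1, hψk, hρk⟩ := hdec k
        rw [G_expand H A (ρ k) (p k) (ψ k) hψk hρk, qfi]
        exact Finset.sum_le_sum fun i _ => Finset.sum_le_sum fun j _ =>
          pointwise_le (p k i) (p k j) (hp0 i) (hp0 j) _ _
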